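/- Let N ≥ 2, let a > 0 and c ∈ ℝ, and define w : ℝ^N → ℝ by w(x) = c + x₁ − x₁⁴ + Σ_{i=2}^{N} (a·x₁·x_i² − x_i² − 2a²·x₁²·x_i²). Then there exists ρ > 0 such that for every x with 0 < ‖x‖ ≤ ρ, the Hessian matrix D²w(x) is negative definite, i.e. vᵀ·D²w(x)·v < 0 for every nonzero v ∈ ℝ^N. -/

import Mathlib

noncomputable def Pj {N : ℕ} (i : Fin N) : EuclideanSpace ℝ (Fin N) →L[ℝ] ℝ :=
  EuclideanSpace.proj i

@[simp] lemma Pj_apply {N : ℕ} (i : Fin N) (u : EuclideanSpace ℝ (Fin N)) : Pj i u = u i := rfl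

lemma stmt6_coord_le_norm {N : ℕ} (x : EuclideanSpace ℝ (Fin N)) (i : Fin N) : |x i| ≤ ‖x‖ := by
  have h2 : (x i)^2 ≤ ∑ j, ‖x j‖^2 :=
    Finset.single_le_sum (f := fun j => ‖x j‖^2) (fun j _ => by positivity) (Finset.mem_univ i)
      |>.trans_eq' (by rw [Real.norm_eq_abs, sq_abs])
  rw [EuclideanSpace.norm_eq, show |x i| = Real.sqrt ((x i)^2) by rw [Real.sqrt_sq_eq_abs]]
  exact Real.sqrt_le_sqrt h2

lemma stmt6_term (a s r u t : ℝ) (ha : 0 < a) (h1 : a*s ≤ 1/32) (h2 : -(1/32) ≤ a*s) :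
    4*a*u*t*r + 2*a*s*t^2 - 2*t^2 - 4*a^2*u^2*r^2 - 16*a^2*s*u*r*t - 4*a^2*s^2*t^2
      ≤ -(a^2/2)*(r^2*u^2) - (1/4)*t^2 := by
  have hc : (4*a - 16*a^2*s)^2 ≤ 21*a^2 := by
    nlinarith [mul_nonneg (sq_nonneg a) (mul_nonneg (by linarith : (0:ℝ) ≤ 1/32 - a*s)
      (by linarith : (0:ℝ) ≤ a*s + 1/32)),
      mul_nonneg (sq_nonneg a) (by linarith : (0:ℝ) ≤ 1/32 - a*s)]
  nlinarith [sq_nonneg ((4*a - 16*a^2*s)*(r*u) - 3*t),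
    mul_le_mul_of_nonneg_right hc (sq_nonneg (r*u)),
    mul_le_mul_of_nonneg_right h1 (sq_nonneg t),
    sq_nonneg (a*s*t)]

set_option maxHeartbeats 1000000 in
/-- For `w(x) = c + x₁ - x₁⁴ + Σ_{i=2}^N (a x₁ x_i² - x_i² - 2a² x₁² x_i²)` on `ℝ^N`
(`N ≥ 2`, `a > 0`), there is `ρ > 0` such that the Hessian of `w` is negative definite
at every `x` with `0 < ‖x‖ ≤ ρ`. -/
theorem stmt_6 (N : ℕ) (hN : 2 ≤ N) (a c : ℝ) (ha : 0 < a)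
    (w : EuclideanSpace ℝ (Fin N) → ℝ)
    (hw : ∀ x : EuclideanSpace ℝ (Fin N),
      w x = c + x ⟨0, by omega⟩ - (x ⟨0, by omega⟩) ^ 4 +
        ∑ i : Fin N, if i ≠ ⟨0, by omega⟩ then
          a * x ⟨0, by omega⟩ * (x i) ^ 2 - (x i) ^ 2
            - 2 * a ^ 2 * (x ⟨0, by omega⟩) ^ 2 * (x i) ^ 2
        else 0) :
    ∃ ρ : ℝ, 0 < ρ ∧ ∀ x : EuclideanSpace ℝ (Fin N), 0 < ‖x‖ → ‖x‖ ≤ ρ →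
      ∀ v : EuclideanSpace ℝ (Fin N), v ≠ 0 →
        fderiv ℝ (fun y => fderiv ℝ w y v) x v < 0 := by
  classical

  set z : Fin N := ⟨0, by omega⟩ with hzdef
  have hp : ∀ (i : Fin N) (y : EuclideanSpace ℝ (Fin N)), HasFDerivAt (fun y : EuclideanSpace ℝ (Fin N) => y i) (Pj i) y :=
    fun i y => (EuclideanSpace.proj (𝕜 := ℝ) i).hasFDerivAt
  have hsq : ∀ (i : Fin N) (y : EuclideanSpace ℝ (Fin N)), HasFDerivAt (fun x : EuclideanSpace ℝ (Fin N) => (x i)^2)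
      (y i • Pj i + y i • Pj i) y := by
    intro i y
    simpa only [← pow_two] using (hp i y).fun_mul (hp i y)
  -- first derivative
  have key1 : ∀ y : EuclideanSpace ℝ (Fin N), ∃ L : EuclideanSpace ℝ (Fin N) →L[ℝ] ℝ, HasFDerivAt w L y ∧ ∀ u,
      L u = (1 - 4*(y z)^3)*(u z) + ∑ i : Fin N, (if i ≠ z then
        (a*(y i)^2 - 4*a^2*(y z)*(y i)^2)*(u z)
          + (2*a*(y z)*(y i) - 2*(y i) - 4*a^2*(y z)^2*(y i))*(u i) else 0) := by
    intro y
    have hwf : w = fun x : EuclideanSpace ℝ (Fin N) => c + x z - (x z)^4 +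
        ∑ i : Fin N, (if i ≠ z then a*(x z)*(x i)^2 - (x i)^2 - 2*a^2*(x z)^2*(x i)^2 else 0) :=
      funext hw
    have hpow4 : HasFDerivAt (fun x : EuclideanSpace ℝ (Fin N) => (x z)^4)
        ((y z)^2 • (y z • Pj z + y z • Pj z) + (y z)^2 • (y z • Pj z + y z • Pj z)) y := by
      simpa only [show ∀ t : ℝ, t^2*t^2 = t^4 from fun t => by ring] using
        (hsq z y).fun_mul (hsq z y)
    have hterm : ∀ i : Fin N, HasFDerivAt
        (fun x : EuclideanSpace ℝ (Fin N) => if i ≠ z then a*(x z)*(x i)^2 - (x i)^2 - 2*a^2*(x z)^2*(x i)^2 else 0)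
        (if i ≠ z then ((a*(y i)^2 - 4*a^2*(y z)*(y i)^2) • Pj z
          + (2*a*(y z)*(y i) - 2*(y i) - 4*a^2*(y z)^2*(y i)) • Pj i) else 0) y := by
      intro i
      by_cases hi : i ≠ z
      · simp only [if_pos hi]
        exact ((((hp z y).const_mul a).mul (hsq i y)).sub (hsq i y)).sub
          (((hsq z y).const_mul (2*a^2)).mul (hsq i y)) |>.congr_fderiv (by
            ext u; simp; ring)
      · simp only [if_neg hi]
        exact hasFDerivAt_const 0 y
    refine ⟨(1 - 4*(y z)^3) • Pj z + ∑ i : Fin N, (if i ≠ z then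
        ((a*(y i)^2 - 4*a^2*(y z)*(y i)^2) • Pj z
          + (2*a*(y z)*(y i) - 2*(y i) - 4*a^2*(y z)^2*(y i)) • Pj i) else 0), ?_, ?_⟩
    · rw [hwf]
      exact ((((hp z y).const_add c).sub hpow4).add (HasFDerivAt.fun_sum fun i _ =>
        hterm i)).congr_fderiv (by ext u; simp; ring)
    · intro u
      simp [ContinuousLinearMap.sum_apply,
        apply_ite (fun (f : EuclideanSpace ℝ (Fin N) →L[ℝ] ℝ) => f u)]
  -- second derivative
  have key2 : ∀ (x v : EuclideanSpace ℝ (Fin N)), ∃ L : EuclideanSpace ℝ (Fin N) →L[ℝ] ℝ,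
      HasFDerivAt (fun y : EuclideanSpace ℝ (Fin N) => (1 - 4*(y z)^3)*(v z) + ∑ i : Fin N, (if i ≠ z then
        (a*(y i)^2 - 4*a^2*(y z)*(y i)^2)*(v z)
          + (2*a*(y z)*(y i) - 2*(y i) - 4*a^2*(y z)^2*(y i))*(v i) else 0)) L x ∧
      L v = -12*(x z)^2*(v z)^2 + ∑ i : Fin N, (if i ≠ z then
        4*a*(v z)*(v i)*(x i) + 2*a*(x z)*(v i)^2 - 2*(v i)^2 - 4*a^2*(v z)^2*(x i)^2
          - 16*a^2*(x z)*(v z)*(x i)*(v i) - 4*a^2*(x z)^2*(v i)^2 else 0) := by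
    intro x v
    have hcube : HasFDerivAt (fun y : EuclideanSpace ℝ (Fin N) => (y z)^3)
        ((x z)^2 • Pj z + x z • (x z • Pj z + x z • Pj z)) x := by
      simpa only [show ∀ t : ℝ, t^2*t = t^3 from fun t => by ring] using
        (hsq z x).fun_mul (hp z x)
    have hterm : ∀ i : Fin N, HasFDerivAt
        (fun y : EuclideanSpace ℝ (Fin N) => if i ≠ z then (a*(y i)^2 - 4*a^2*(y z)*(y i)^2)*(v z)
          + (2*a*(y z)*(y i) - 2*(y i) - 4*a^2*(y z)^2*(y i))*(v i) else 0)
        (if i ≠ z then (((-4*a^2*(x i)^2)*(v z) + (2*a*(x i) - 8*a^2*(x z)*(x i))*(v i)) • Pj z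
          + ((2*a*(x i) - 8*a^2*(x z)*(x i))*(v z)
            + (2*a*(x z) - 2 - 4*a^2*(x z)^2)*(v i)) • Pj i) else 0) x := by
      intro i
      by_cases hi : i ≠ z
      · simp only [if_pos hi]
        exact ((((hsq i x).const_mul a).sub (((hp z x).const_mul (4*a^2)).mul
          (hsq i x))).mul_const (v z)).add
          (((((hp z x).const_mul (2*a)).mul (hp i x)).sub ((hp i x).const_mul 2) |>.sub
            (((hsq z x).const_mul (4*a^2)).mul (hp i x))).mul_const (v i)) |>.congr_fderiv (by
              ext u; simp; ring)
      · simp only [if_neg hi]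
        exact hasFDerivAt_const 0 x
    refine ⟨(-12*(x z)^2*(v z)) • Pj z + ∑ i : Fin N, (if i ≠ z then
        (((-4*a^2*(x i)^2)*(v z) + (2*a*(x i) - 8*a^2*(x z)*(x i))*(v i)) • Pj z
          + ((2*a*(x i) - 8*a^2*(x z)*(x i))*(v z)
            + (2*a*(x z) - 2 - 4*a^2*(x z)^2)*(v i)) • Pj i) else 0), ?_, ?_⟩
    · exact ((((hcube.const_mul 4).const_sub 1).mul_const (v z)).add
        (HasFDerivAt.fun_sum fun i _ => hterm i)).congr_fderiv (by ext u; simp; ring)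
    · simp only [ContinuousLinearMap.add_apply, ContinuousLinearMap.coe_smul',
        Pi.smul_apply, Pj_apply, smul_eq_mul, ContinuousLinearMap.sum_apply,
        apply_ite (fun (f : EuclideanSpace ℝ (Fin N) →L[ℝ] ℝ) => f v), ContinuousLinearMap.zero_apply]
      refine congrArg₂ (· + ·) (by ring) (Finset.sum_congr rfl fun i _ => ?_)
      by_cases hi : i ≠ z
      · simp only [if_pos hi]; ring
      · simp only [if_neg hi]
  refine ⟨1/(32*a), by positivity, ?_⟩
  intro x hx0 hxρ v hv
  have hfe : (fun y : EuclideanSpace ℝ (Fin N) => fderiv ℝ w y v) = fun y : EuclideanSpace ℝ (Fin N) =>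
      (1 - 4*(y z)^3)*(v z) + ∑ i : Fin N, (if i ≠ z then
        (a*(y i)^2 - 4*a^2*(y z)*(y i)^2)*(v z)
          + (2*a*(y z)*(y i) - 2*(y i) - 4*a^2*(y z)^2*(y i))*(v i) else 0) := by
    funext y
    obtain ⟨L, hL, he⟩ := key1 y
    rw [hL.fderiv]; exact he v
  obtain ⟨L2, hL2, he2⟩ := key2 x v
  rw [hfe, hL2.fderiv, he2]
  -- now the inequality
  have hρx : |x z| ≤ 1/(32*a) := (stmt6_coord_le_norm x z).trans hxρ
  rw [abs_le] at hρx
  have e32 : a * (1/(32*a)) = 1/32 := by field_simp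
  have h1 : a * x z ≤ 1/32 := by
    rw [← e32]; exact mul_le_mul_of_nonneg_left hρx.2 ha.le
  have h2 : -(1/32) ≤ a * x z := by
    rw [show -(1/32 : ℝ) = a * (-(1/(32*a))) from by rw [mul_neg, e32]]
    exact mul_le_mul_of_nonneg_left hρx.1 ha.le
  set T : Fin N → ℝ := fun i =>
    4*a*(v z)*(v i)*(x i) + 2*a*(x z)*(v i)^2 - 2*(v i)^2 - 4*a^2*(v z)^2*(x i)^2
      - 16*a^2*(x z)*(v z)*(x i)*(v i) - 4*a^2*(x z)^2*(v i)^2 with hT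
  set B : Fin N → ℝ := fun i => -(a^2/2)*((x i)^2*(v z)^2) - (1/4)*(v i)^2 with hB
  have hTB : ∀ i : Fin N, (if i ≠ z then T i else 0) ≤ (if i ≠ z then B i else 0) := by
    intro i
    by_cases hi : i ≠ z
    · simp only [if_pos hi, hT, hB]
      exact stmt6_term a (x z) (x i) (v z) (v i) ha h1 h2
    · simp [hi]
  have hsum : (∑ i : Fin N, (if i ≠ z then T i else 0)) ≤
      ∑ i : Fin N, (if i ≠ z then B i else 0) :=
    Finset.sum_le_sum fun i _ => hTB i
  have hBnonpos : ∀ i : Fin N, (if i ≠ z then B i else 0) ≤ 0 := by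
    intro i
    by_cases hi : i ≠ z
    · simp only [if_pos hi, hB]
      nlinarith [sq_nonneg (x i * v z), sq_nonneg (v i), sq_nonneg a, sq_nonneg (x i), sq_nonneg (v z)]
    · simp [hi]
  have hxne : x ≠ 0 := by
    intro h; rw [h] at hx0; simp at hx0
  have hstrict : (∑ i : Fin N, (if i ≠ z then B i else 0)) < 0 ∨
      (-12*(x z)^2*(v z)^2 < 0) := by
    by_cases hvi : ∃ i, i ≠ z ∧ v i ≠ 0
    · obtain ⟨i0, hi0, hvi0⟩ := hvi
      left
      have : (∑ i : Fin N, (if i ≠ z then B i else 0)) < ∑ i : Fin N, (0:ℝ) := by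
        refine Finset.sum_lt_sum (fun i _ => hBnonpos i) ⟨i0, Finset.mem_univ i0, ?_⟩
        simp only [if_pos hi0, hB]
        nlinarith [sq_nonneg (x i0 * v z), sq_nonneg (v i0), sq_pos_of_ne_zero hvi0]
      simpa using this
    · push_neg at hvi
      have hvz : v z ≠ 0 := by
        intro hvz
        apply hv
        ext i
        by_cases hi : i = z
        · rw [hi]; exact hvz
        · exact hvi i hi
      by_cases hxz : x z = 0
      · left
        obtain ⟨i0, hxi0⟩ : ∃ i, x i ≠ 0 := by
          by_contra hall
          push_neg at hall
          exact hxne (PiLp.ext hall)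
        have hi0 : i0 ≠ z := by intro h; rw [h, hxz] at hxi0; exact hxi0 rfl
        have : (∑ i : Fin N, (if i ≠ z then B i else 0)) < ∑ i : Fin N, (0:ℝ) := by
          refine Finset.sum_lt_sum (fun i _ => hBnonpos i) ⟨i0, Finset.mem_univ i0, ?_⟩
          simp only [if_pos hi0, hB]
          nlinarith [sq_nonneg (v i0), sq_pos_of_ne_zero hxi0, sq_pos_of_ne_zero hvz,
            mul_pos (mul_pos (mul_pos ha ha) (sq_pos_of_ne_zero hxi0)) (sq_pos_of_ne_zero hvz)]
        simpa using this
      · right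
        nlinarith [sq_pos_of_ne_zero hxz, sq_pos_of_ne_zero hvz,
          mul_pos (sq_pos_of_ne_zero hxz) (sq_pos_of_ne_zero hvz)]
  have hfirst : -12*(x z)^2*(v z)^2 ≤ 0 := by nlinarith [sq_nonneg (x z * v z)]
  have hSnonpos : (∑ i : Fin N, (if i ≠ z then B i else 0)) ≤ 0 :=
    Finset.sum_nonpos fun i _ => hBnonpos i
  rcases hstrict with h | h
  · linarith
  · linarith
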